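/- Let n and s be integers with s ≥ 3 and n ≥ 2s + 4. Let F be a stable 3-graph with vertex set [n]. If F has property U(s, 2s+1), ν(F) ≥ 2, and ν(∂F) ≥ s + 2, then |F| ≤ max{ C(n−1, 2), (n−s−1)·C(s+1, 2) + C(s+1, 3), C(2s+1, 3) }. -/

import Mathlib

open Finset

/-- `F₁ ≺ F₂`: same size, and the `i`-th smallest element of `F₁` is at most
the `i`-th smallest element of `F₂`. -/
def PrecS (A B : Finset ℕ) : Prop :=
  A.card = B.card ∧
    ∀ i, i < A.card → (A.sort (· ≤ ·)).getD i 0 ≤ (B.sort (· ≤ ·)).getD i 0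

/-- A family of subsets of `[n] = {1,…,n}` is stable (shifted). -/
def IsStable (n : ℕ) (F : Finset (Finset ℕ)) : Prop :=
  ∀ A B : Finset ℕ, A ⊆ Finset.Icc 1 n → B ∈ F → PrecS A B → A ∈ F

/-- Property `U(s, q)`: any `s` edges (repetitions allowed) have union of size at most `q`. -/
def HasU (F : Finset (Finset ℕ)) (s q : ℕ) : Prop :=
  ∀ f : Fin s → Finset ℕ, (∀ i, f i ∈ F) → (Finset.univ.biUnion f).card ≤ q

/-- Matching number: the maximum size of a set of pairwise disjoint edges of `F`. -/
def matchNum (F : Finset (Finset ℕ)) : ℕ :=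
  (F.powerset.filter fun M => ∀ a ∈ M, ∀ b ∈ M, a ≠ b → Disjoint a b).sup Finset.card

/-- Shadow of a 3-uniform family: all 2-element subsets of its edges. -/
def shadow2 (F : Finset (Finset ℕ)) : Finset (Finset ℕ) :=
  F.biUnion fun f => f.powersetCard 2

/-- Deletion of the first `i` vertices: edges disjoint from `[i] = {1,…,i}`. -/
def del (F : Finset (Finset ℕ)) (i : ℕ) : Finset (Finset ℕ) :=
  F.filter fun e => Disjoint e (Finset.Icc 1 i)


lemma two_mul_choose_two (m : ℕ) : 2 * m.choose 2 = m * (m - 1) := by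
  induction m with
  | zero => rfl
  | succ p ih =>
    rw [Nat.choose_succ_succ, Nat.choose_one_right, Nat.mul_add, ih]
    rcases p with - | q
    · rfl
    · simp only [Nat.add_sub_cancel]
      ring

lemma six_mul_choose_three (m : ℕ) : 6 * m.choose 3 = m * (m - 1) * (m - 2) := by
  induction m with
  | zero => rfl
  | succ p ih =>
    rw [Nat.choose_succ_succ, Nat.mul_add, ih]
    have h2 : 6 * p.choose 2 = 3 * (2 * p.choose 2) := by ring
    rw [h2, two_mul_choose_two]
    rcases p with - | q
    · rfl
    · rcases q with - | r
      · rfl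
      · have h3 : r + 1 + 1 + 1 - 1 = r + 2 := by omega
        have h4 : r + 1 + 1 + 1 - 2 = r + 1 := by omega
        have h5 : r + 1 + 1 - 1 = r + 1 := by omega
        have h6 : r + 1 + 1 - 2 = r := by omega
        rw [h3, h4, h5, h6]
        ring

lemma arith_main {n s : ℕ} (hs : 3 ≤ s) (hn : 2 * s + 4 ≤ n) :
    (Nat.choose (n-1) 2 - Nat.choose (n-s-2) 2) + Nat.choose (s-1) 2 + Nat.choose s 3
      + Nat.choose s 2 * s
    ≤ (n - s - 1) * Nat.choose (s+1) 2 + Nat.choose (s+1) 3 := by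
  obtain ⟨t, rfl⟩ : ∃ t, s = t + 3 := ⟨s - 3, by omega⟩
  obtain ⟨k, rfl⟩ : ∃ k, n = k + 2 * t + 10 := ⟨n - (2*t + 10), by omega⟩
  have e1 : k + 2*t + 10 - 1 = k + 2*t + 9 := by omega
  have e2 : k + 2*t + 10 - (t+3) - 2 = k + t + 5 := by omega
  have e3 : t + 3 - 1 = t + 2 := by omega
  have e4 : k + 2*t + 10 - (t+3) - 1 = k + t + 6 := by omega
  have e5 : t + 3 + 1 = t + 4 := by omega
  rw [e1, e2, e3, e4, e5]
  set a := Nat.choose (k + 2*t + 9) 2 with ha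
  set b := Nat.choose (k + t + 5) 2 with hb
  set c := Nat.choose (t + 2) 2 with hc
  set d := Nat.choose (t + 3) 3 with hd
  set e := Nat.choose (t + 3) 2 with he
  set C := Nat.choose (t + 4) 2 with hC
  set D := Nat.choose (t + 4) 3 with hD
  have h2a : 2 * a = (k + 2*t + 9) * (k + 2*t + 8) := by
    have h := two_mul_choose_two (k + 2*t + 9)
    rw [show k + 2*t + 9 - 1 = k + 2*t + 8 from by omega] at h
    exact h
  have h2b : 2 * b = (k + t + 5) * (k + t + 4) := by
    have h := two_mul_choose_two (k + t + 5)
    rw [show k + t + 5 - 1 = k + t + 4 from by omega] at h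
    exact h
  have h2c : 2 * c = (t + 2) * (t + 1) := by
    have h := two_mul_choose_two (t + 2)
    rw [show t + 2 - 1 = t + 1 from by omega] at h
    exact h
  have h6d : 6 * d = (t + 3) * (t + 2) * (t + 1) := by
    have h := six_mul_choose_three (t + 3)
    rw [show t + 3 - 1 = t + 2 from by omega, show t + 3 - 2 = t + 1 from by omega] at h
    exact h
  have h2e : 2 * e = (t + 3) * (t + 2) := by
    have h := two_mul_choose_two (t + 3)
    rw [show t + 3 - 1 = t + 2 from by omega] at h
    exact h
  have h2C : 2 * C = (t + 4) * (t + 3) := by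
    have h := two_mul_choose_two (t + 4)
    rw [show t + 4 - 1 = t + 3 from by omega] at h
    exact h
  have h6D : 6 * D = (t + 4) * (t + 3) * (t + 2) := by
    have h := six_mul_choose_three (t + 4)
    rw [show t + 4 - 1 = t + 3 from by omega, show t + 4 - 2 = t + 2 from by omega] at h
    exact h
  have hab : b ≤ a := Nat.choose_le_choose 2 (by omega)
  suffices h : 6*a + 6*c + 6*d + 6*(e*(t+3)) ≤ 6*((k + t + 6) * C + D) + 6*b by omega
  have hL : 6*a + 6*c + 6*d + 6*(e*(t+3)) =
      3*((k + 2*t + 9) * (k + 2*t + 8)) + 3*((t + 2) * (t + 1))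
        + (t + 3) * (t + 2) * (t + 1) + 3*((t + 3) * (t + 2))*(t+3) := by
    rw [show 6*a = 3*(2*a) from by ring, show 6*c = 3*(2*c) from by ring,
      show 6*(e*(t+3)) = 3*(2*e)*(t+3) from by ring, h2a, h2c, h6d, h2e]
  have hR : 6*((k + t + 6) * C + D) + 6*b =
      3*(k + t + 6)*((t + 4) * (t + 3)) + (t + 4) * (t + 3) * (t + 2)
        + 3*((k + t + 5) * (k + t + 4)) := by
    rw [show 6*((k + t + 6) * C + D) + 6*b = 3*(k+t+6)*(2*C) + 6*D + 3*(2*b) from by ring,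
      h2C, h6D, h2b]
  rw [hL, hR]
  have key : 3*(k + t + 6)*((t + 4) * (t + 3)) + (t + 4) * (t + 3) * (t + 2)
        + 3*((k + t + 5) * (k + t + 4))
      = (3*((k + 2*t + 9) * (k + 2*t + 8)) + 3*((t + 2) * (t + 1))
        + (t + 3) * (t + 2) * (t + 1) + 3*((t + 3) * (t + 2))*(t+3))
        + (18 + 30*t + 6*t^2 + 12*k + 15*k*t + 3*k*t^2) := by ring
  rw [key]
  exact Nat.le_add_right _ _

lemma sort_triple {x y z : ℕ} (hxy : x < y) (hyz : y < z) :
    ({x, y, z} : Finset ℕ).sort (· ≤ ·) = [x, y, z] := by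
  have h2 : ({y, z} : Finset ℕ).sort (· ≤ ·) = [y, z] := by
    rw [show ({y, z} : Finset ℕ) = insert y {z} from rfl, Finset.sort_insert]
    · rw [Finset.sort_singleton]
    · intro b hb; simp at hb; omega
    · simp; omega
  rw [show ({x, y, z} : Finset ℕ) = insert x {y, z} from rfl, Finset.sort_insert]
  · rw [h2]
  · intro b hb; simp at hb; rcases hb with h | h <;> omega
  · simp; omega

lemma card_triple {x y z : ℕ} (hxy : x < y) (hyz : y < z) :
    ({x, y, z} : Finset ℕ).card = 3 := by
  rw [Finset.card_insert_of_notMem (by simp; omega),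
    Finset.card_insert_of_notMem (by simp; omega), Finset.card_singleton]

lemma precS_triple {u v w x y z : ℕ} (huv : u < v) (hvw : v < w)
    (hxy : x < y) (hyz : y < z) (h1 : u ≤ x) (h2 : v ≤ y) (h3 : w ≤ z) :
    PrecS {u, v, w} {x, y, z} := by
  constructor
  · rw [card_triple huv hvw, card_triple hxy hyz]
  · intro i hi
    rw [card_triple huv hvw] at hi
    rw [sort_triple huv hvw, sort_triple hxy hyz]
    interval_cases i <;> simpa

/-- If e = {x,y,z} ∈ F (sorted) and u<v<w with coordinates below and w ≤ n, 1 ≤ u, then {u,v,w} ∈ F. -/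
lemma stable_triple {n : ℕ} {F : Finset (Finset ℕ)} (hst : IsStable n F)
    {x y z u v w : ℕ} (he : ({x, y, z} : Finset ℕ) ∈ F)
    (hxy : x < y) (hyz : y < z) (huv : u < v) (hvw : v < w)
    (h1 : u ≤ x) (h2 : v ≤ y) (h3 : w ≤ z) (hu : 1 ≤ u) (hw : w ≤ n) :
    ({u, v, w} : Finset ℕ) ∈ F := by
  refine hst _ _ ?_ he (precS_triple huv hvw hxy hyz h1 h2 h3)
  intro a ha
  simp only [Finset.mem_insert, Finset.mem_singleton] at ha
  rw [Finset.mem_Icc]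
  rcases ha with rfl | rfl | rfl <;> omega

/-- Every `e ∈ F` has a sorted 3-element representation inside `[1,n]`. -/

lemma triple_comm {x y z : ℕ} : ({x, y, z} : Finset ℕ) = {y, x, z} := by
  ext t; simp; tauto

lemma triple_rot {x y z : ℕ} : ({x, y, z} : Finset ℕ) = {y, z, x} := by
  ext t; simp; tauto

/-- Every `e ∈ F` has a sorted 3-element representation inside `[1,n]`. -/
lemma exists_sorted_rep {n : ℕ} {F : Finset (Finset ℕ)}
    (hF : ∀ e ∈ F, e ⊆ Finset.Icc 1 n ∧ e.card = 3) {e : Finset ℕ} (he : e ∈ F) :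
    ∃ x y z, x < y ∧ y < z ∧ e = {x, y, z} ∧ 1 ≤ x ∧ z ≤ n := by
  obtain ⟨hsub, hcard⟩ := hF e he
  obtain ⟨a, b, c, hab, hac, hbc, rfl⟩ := Finset.card_eq_three.mp hcard
  have ha := hsub (by simp : a ∈ ({a,b,c} : Finset ℕ))
  have hb := hsub (by simp : b ∈ ({a,b,c} : Finset ℕ))
  have hc := hsub (by simp : c ∈ ({a,b,c} : Finset ℕ))
  rw [Finset.mem_Icc] at ha hb hc
  rcases Nat.lt_trichotomy a b with h1 | h1 | h1
  · rcases Nat.lt_trichotomy b c with h2 | h2 | h2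
    · exact ⟨a, b, c, h1, h2, rfl, by omega, by omega⟩
    · omega
    · rcases Nat.lt_trichotomy a c with h3 | h3 | h3
      · exact ⟨a, c, b, h3, h2, by ext t; simp; tauto, by omega, by omega⟩
      · omega
      · exact ⟨c, a, b, h3, h1, by ext t; simp; tauto, by omega, by omega⟩
  · omega
  · rcases Nat.lt_trichotomy b c with h2 | h2 | h2
    · rcases Nat.lt_trichotomy a c with h3 | h3 | h3
      · exact ⟨b, a, c, h1, h3, by ext t; simp; tauto, by omega, by omega⟩
      · omega
      · exact ⟨b, c, a, h2, h3, by ext t; simp; tauto, by omega, by omega⟩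
    · omega
    · exact ⟨c, b, a, h2, h1, by ext t; simp; tauto, by omega, by omega⟩

lemma exists_matching {F : Finset (Finset ℕ)} {k : ℕ} (hk : 1 ≤ k) (h : k ≤ matchNum F) :
    ∃ M : Finset (Finset ℕ), M ⊆ F ∧ (∀ a ∈ M, ∀ b ∈ M, a ≠ b → Disjoint a b) ∧ k ≤ M.card := by
  unfold matchNum at h
  rw [Finset.le_sup_iff (by omega : (0:ℕ) < k)] at h
  obtain ⟨M, hM, hcard⟩ := h
  rw [Finset.mem_filter, Finset.mem_powerset] at hM
  exact ⟨M, hM.1, hM.2, hcard⟩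

lemma mem_shadow2 {F : Finset (Finset ℕ)} {p : Finset ℕ} (h : p ∈ shadow2 F) :
    ∃ e ∈ F, p ⊆ e ∧ p.card = 2 := by
  rw [shadow2, Finset.mem_biUnion] at h
  obtain ⟨e, he, hp⟩ := h
  rw [Finset.mem_powersetCard] at hp
  exact ⟨e, he, hp.1, hp.2⟩

section main
variable {n s : ℕ} {F : Finset (Finset ℕ)}

/-- key: the canonical edges {1, i, 2s+5-i} are all in F. -/
lemma g_mem (hs : 3 ≤ s) (hn : 2 * s + 4 ≤ n)
    (hF : ∀ e ∈ F, e ⊆ Finset.Icc 1 n ∧ e.card = 3)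
    (hst : IsStable n F)
    (hnus : s + 2 ≤ matchNum (shadow2 F)) :
    ∀ i, 2 ≤ i → i ≤ s + 2 → ({1, i, 2 * s + 5 - i} : Finset ℕ) ∈ F := by
  obtain ⟨M, hMsub, hMdisj, hMcard⟩ := exists_matching (by omega) hnus
  intro i hi2 his
  -- each member of M is a pair inside an edge
  have hpair : ∀ p ∈ M, ∃ e ∈ F, p ⊆ e ∧ p.card = 2 := fun p hp => mem_shadow2 (hMsub hp)
  -- elements of members are ≥ 1
  have hge1 : ∀ p ∈ M, ∀ w ∈ p, 1 ≤ w := by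
    intro p hp w hw
    obtain ⟨e, he, hsub, -⟩ := hpair p hp
    have := (hF e he).1 (hsub hw)
    rw [Finset.mem_Icc] at this; omega
  classical
  set L := M.filter (fun p => ∀ w ∈ p, i ≤ w) with hL
  -- card of M \ L
  have hchoice : ∀ p ∈ M \ L, ∃ w, w ∈ p ∧ 1 ≤ w ∧ w < i := by
    intro p hp
    rw [Finset.mem_sdiff, hL, Finset.mem_filter] at hp
    obtain ⟨hpM, hnot⟩ := hp
    push_neg at hnot
    obtain ⟨w, hw, hwi⟩ := hnot hpM
    exact ⟨w, hw, hge1 p hpM w hw, by omega⟩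
  set f : Finset ℕ → ℕ := fun p => if h : ∃ w, w ∈ p ∧ 1 ≤ w ∧ w < i then h.choose else 0 with hf
  have hfspec : ∀ p ∈ M \ L, f p ∈ p ∧ 1 ≤ f p ∧ f p < i := by
    intro p hp
    have h := hchoice p hp
    rw [hf]; simp only [dif_pos h]
    exact h.choose_spec
  have hcard1 : (M \ L).card ≤ i - 1 := by
    have : (M \ L).card ≤ (Finset.Icc 1 (i-1)).card := by
      apply Finset.card_le_card_of_injOn f
      · intro p hp
        have := hfspec p hp
        rw [Finset.mem_coe, Finset.mem_Icc]; omega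
      · intro p hp q hq hpq
        by_contra hne
        have hd := hMdisj p (Finset.mem_sdiff.mp hp).1 q (Finset.mem_sdiff.mp hq).1 hne
        exact (Finset.disjoint_left.mp hd (hfspec p hp).1) (hpq ▸ (hfspec q hq).1)
    rwa [Nat.card_Icc, Nat.add_sub_cancel] at this
  have hcardL : s + 3 - i ≤ L.card := by
    have h1 : M.card ≤ L.card + (M \ L).card := by
      rw [← Finset.card_union_of_disjoint (Finset.disjoint_sdiff)]
      apply Finset.card_le_card
      intro p hp
      rw [Finset.mem_union, Finset.mem_sdiff]
      by_cases hpL : p ∈ L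
      · exact Or.inl hpL
      · exact Or.inr ⟨hp, hpL⟩
    omega
  -- the union of pairs in L
  set V := L.biUnion id with hV
  have hp2 : ∀ p ∈ M, p.card = 2 := by
    intro p hp; obtain ⟨e, he, hs2, h2⟩ := hpair p hp; exact h2
  have hcardV : V.card = 2 * L.card := by
    rw [hV, Finset.card_biUnion]
    · have : ∑ u ∈ L, (id u).card = ∑ _u ∈ L, 2 :=
        Finset.sum_congr rfl (fun p hp => hp2 p (Finset.mem_filter.mp hp).1)
      rw [this, Finset.sum_const, smul_eq_mul, Nat.mul_comm]
    · intro p hp q hq hne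
      exact hMdisj p (Finset.mem_filter.mp hp).1 q (Finset.mem_filter.mp hq).1 hne
  have hVne : V.Nonempty := by
    rw [← Finset.card_pos, hcardV]; omega
  have hVge : ∀ w ∈ V, i ≤ w := by
    intro w hw
    rw [hV, Finset.mem_biUnion] at hw
    obtain ⟨p, hp, hwp⟩ := hw
    exact (Finset.mem_filter.mp hp).2 w hwp
  set y := V.max' hVne with hy
  have hymem := V.max'_mem hVne
  have hyle : ∀ w ∈ V, w ≤ y := fun w hw => V.le_max' w hw
  have hysz : 2 * s + 5 - i ≤ y := by
    have hsub : V ⊆ Finset.Icc i y := by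
      intro w hw; rw [Finset.mem_Icc]; exact ⟨hVge w hw, hyle w hw⟩
    have := Finset.card_le_card hsub
    rw [Nat.card_Icc, hcardV] at this
    omega
  -- find the pair containing y
  obtain ⟨p, hpL, hyp⟩ := Finset.mem_biUnion.mp (show y ∈ L.biUnion id from hymem)
  have hpM : p ∈ M := (Finset.mem_filter.mp hpL).1
  obtain ⟨e, heF, hpe, hp2⟩ := hpair p hpM
  obtain ⟨u, v, huv, rfl⟩ := Finset.card_eq_two.mp hp2
  -- x = the other element
  have hxmem : ∀ w, w ∈ ({u,v} : Finset ℕ) → w ∈ V := by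
    intro w hw
    rw [hV, Finset.mem_biUnion]; exact ⟨{u,v}, hpL, hw⟩
  obtain ⟨x, hxp, hxy⟩ : ∃ x, x ∈ ({u,v} : Finset ℕ) ∧ x ≠ y := by
    rcases Finset.mem_insert.mp hyp with rfl | hyv
    · exact ⟨v, by simp, fun h => huv h.symm⟩
    · rw [Finset.mem_singleton] at hyv; subst hyv
      exact ⟨u, by simp, huv⟩
  have hxi : i ≤ x := hVge x (hxmem x hxp)
  have hxley : x ≤ y := hyle x (hxmem x hxp)
  -- sorted representation of e
  obtain ⟨a, b, c, hab, hbc, rfl, ha1, hcn⟩ := exists_sorted_rep hF heF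
  have hxe : x ∈ ({a,b,c} : Finset ℕ) := hpe hxp
  have hye : y ∈ ({a,b,c} : Finset ℕ) := hpe hyp
  have hcy : y ≤ c := by
    simp only [Finset.mem_insert, Finset.mem_singleton] at hye
    rcases hye with rfl | rfl | rfl <;> omega
  have hbx : x ≤ b := by
    simp only [Finset.mem_insert, Finset.mem_singleton] at hxe hye
    rcases hxe with rfl | rfl | rfl
    · omega
    · omega
    · -- x = c: then y > x = c contradiction with y ≤ c, unless y < x... x ≠ y, x ≤ y
      rcases hye with rfl | rfl | rfl <;> omega
  exact stable_triple hst heF hab hbc (by omega) (by omega) (by omega) (by omega) (by omega)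
    (by omega) (by omega)

lemma union_bound (hU : HasU F s (2 * s + 1)) (f : Fin s → Finset ℕ)
    (hf : ∀ i, f i ∈ F) (hcov : Finset.Icc 1 (2 * s + 2) ⊆ Finset.univ.biUnion f) : False := by
  have h1 := hU f hf
  have h2 := Finset.card_le_card hcov
  rw [Nat.card_Icc] at h2
  omega

lemma two34 (hs : 3 ≤ s) (hn : 2 * s + 4 ≤ n)
    (hF : ∀ e ∈ F, e ⊆ Finset.Icc 1 n ∧ e.card = 3)
    (hst : IsStable n F) (hnu : 2 ≤ matchNum F) :
    ({2, 3, 4} : Finset ℕ) ∈ F := by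
  obtain ⟨M, hMsub, hMdisj, hMcard⟩ := exists_matching (by omega) hnu
  obtain ⟨A, hA, B, hB, hAB⟩ := Finset.one_lt_card.mp (by omega : 1 < M.card)
  have hdisj := hMdisj A hA B hB hAB
  have hpick : ∃ C ∈ F, (1 : ℕ) ∉ C := by
    by_cases h1A : (1 : ℕ) ∈ A
    · exact ⟨B, hMsub hB, fun h1B => (Finset.disjoint_left.mp hdisj h1A) h1B⟩
    · exact ⟨A, hMsub hA, h1A⟩
  obtain ⟨C, hCF, hC1⟩ := hpick
  obtain ⟨x, y, z, hxy, hyz, rfl, hx1, hzn⟩ := exists_sorted_rep hF hCF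
  have hx2 : 2 ≤ x := by
    rcases Nat.lt_or_ge x 2 with h | h
    · interval_cases x
      · exact absurd (by simp : (1:ℕ) ∈ ({1,y,z} : Finset ℕ)) hC1
    · exact h
  exact stable_triple hst hCF hxy hyz (by omega) (by omega) (by omega) (by omega) (by omega)
    (by omega) (by omega)

lemma L1 (hs : 3 ≤ s) (hn : 2 * s + 4 ≤ n)
    (hF : ∀ e ∈ F, e ⊆ Finset.Icc 1 n ∧ e.card = 3)
    (hst : IsStable n F) (hU : HasU F s (2 * s + 1))
    (hnus : s + 2 ≤ matchNum (shadow2 F)) :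
    ({2, s + 2, s + 3} : Finset ℕ) ∉ F := by
  intro hbad
  have hg := g_mem hs hn hF hst hnus
  apply union_bound hU
    (fun i => if (i : ℕ) = 0 then {2, s+2, s+3} else {1, (i:ℕ)+2, 2*s+3-(i:ℕ)})
  · intro i
    by_cases h0 : (i : ℕ) = 0
    · rw [if_pos h0]; exact hbad
    · rw [if_neg h0]
      have hi1 : 1 ≤ (i : ℕ) := by omega
      have hi2 : (i : ℕ) ≤ s - 1 := by have := i.isLt; omega
      have := hg ((i:ℕ)+2) (by omega) (by omega)
      have heq : 2*s+5-((i:ℕ)+2) = 2*s+3-(i:ℕ) := by omega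
      rwa [heq] at this
  · intro v hv
    rw [Finset.mem_Icc] at hv
    rw [Finset.mem_biUnion]
    by_cases hv2 : v = 2 ∨ v = s + 2 ∨ v = s + 3
    · refine ⟨⟨0, by omega⟩, Finset.mem_univ _, ?_⟩
      rw [if_pos rfl]
      simp only [Finset.mem_insert, Finset.mem_singleton]; omega
    · push_neg at hv2
      by_cases hvlow : v ≤ s + 1
      · -- v = 1 -> index 1 ; 3 ≤ v ≤ s+1 -> index v-2
        by_cases hv1 : v = 1
        · refine ⟨⟨1, by omega⟩, Finset.mem_univ _, ?_⟩
          rw [if_neg (by simp)]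
          simp only [Finset.mem_insert, Finset.mem_singleton]; omega
        · refine ⟨⟨v - 2, by omega⟩, Finset.mem_univ _, ?_⟩
          rw [if_neg (by simp; omega)]
          simp only [Finset.mem_insert, Finset.mem_singleton]
          right; left; omega
      · -- s+4 ≤ v ≤ 2s+2 -> index 2s+3-v
        refine ⟨⟨2*s+3-v, by omega⟩, Finset.mem_univ _, ?_⟩
        rw [if_neg (by simp; omega)]
        simp only [Finset.mem_insert, Finset.mem_singleton]
        right; right; omega


lemma L2 (hs : 3 ≤ s) (hn : 2 * s + 4 ≤ n)
    (hF : ∀ e ∈ F, e ⊆ Finset.Icc 1 n ∧ e.card = 3)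
    (hst : IsStable n F) (hU : HasU F s (2 * s + 1))
    (hnus : s + 2 ≤ matchNum (shadow2 F)) :
    ({2, 3, 2 * s + 2} : Finset ℕ) ∉ F := by
  intro hbad
  have hg := g_mem hs hn hF hst hnus
  apply union_bound hU
    (fun i => if (i : ℕ) = 0 then {2, 3, 2*s+2} else {1, (i:ℕ)+3, 2*s+2-(i:ℕ)})
  · intro i
    by_cases h0 : (i : ℕ) = 0
    · rw [if_pos h0]; exact hbad
    · rw [if_neg h0]
      have hi2 : (i : ℕ) ≤ s - 1 := by have := i.isLt; omega
      have := hg ((i:ℕ)+3) (by omega) (by omega)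
      have heq : 2*s+5-((i:ℕ)+3) = 2*s+2-(i:ℕ) := by omega
      rwa [heq] at this
  · intro v hv
    rw [Finset.mem_Icc] at hv
    rw [Finset.mem_biUnion]
    by_cases hv2 : v = 2 ∨ v = 3 ∨ v = 2*s+2
    · refine ⟨⟨0, by omega⟩, Finset.mem_univ _, ?_⟩
      rw [if_pos rfl]
      simp only [Finset.mem_insert, Finset.mem_singleton]; omega
    · push_neg at hv2
      by_cases hvlow : v ≤ s + 2
      · by_cases hv1 : v = 1
        · refine ⟨⟨1, by omega⟩, Finset.mem_univ _, ?_⟩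
          rw [if_neg (by simp)]
          simp only [Finset.mem_insert, Finset.mem_singleton]; omega
        · refine ⟨⟨v - 3, by omega⟩, Finset.mem_univ _, ?_⟩
          rw [if_neg (by simp; omega)]
          simp only [Finset.mem_insert, Finset.mem_singleton]
          right; left; omega
      · refine ⟨⟨2*s+2-v, by omega⟩, Finset.mem_univ _, ?_⟩
        rw [if_neg (by simp; omega)]
        simp only [Finset.mem_insert, Finset.mem_singleton]
        right; right; omega

lemma L3 (hs : 3 ≤ s) (hn : 2 * s + 4 ≤ n)
    (hF : ∀ e ∈ F, e ⊆ Finset.Icc 1 n ∧ e.card = 3)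
    (hst : IsStable n F) (hU : HasU F s (2 * s + 1))
    (hnu : 2 ≤ matchNum F)
    (hnus : s + 2 ≤ matchNum (shadow2 F)) :
    ({1, s + 3, 2 * s + 2} : Finset ℕ) ∉ F := by
  intro hbad
  have hg := g_mem hs hn hF hst hnus
  have h234 := two34 hs hn hF hst hnu
  have hbad2 : ({1, s + 2, 2 * s + 1} : Finset ℕ) ∈ F :=
    stable_triple hst hbad (by omega) (by omega) (by omega) (by omega) (by omega) (by omega)
      (by omega) (by omega) (by omega)
  apply union_bound hU
    (fun i => if (i : ℕ) = 0 then {2,3,4} else if (i : ℕ) = 1 then {1, s+3, 2*s+2}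
      else if (i : ℕ) = 2 then {1, s+2, 2*s+1} else {1, (i:ℕ)+2, 2*s+3-(i:ℕ)})
  · intro i
    by_cases h0 : (i : ℕ) = 0
    · rw [if_pos h0]; exact h234
    · rw [if_neg h0]
      by_cases h1 : (i : ℕ) = 1
      · rw [if_pos h1]; exact hbad
      · rw [if_neg h1]
        by_cases h2 : (i : ℕ) = 2
        · rw [if_pos h2]; exact hbad2
        · rw [if_neg h2]
          have hi2 : (i : ℕ) ≤ s - 1 := by have := i.isLt; omega
          have := hg ((i:ℕ)+2) (by omega) (by omega)
          have heq : 2*s+5-((i:ℕ)+2) = 2*s+3-(i:ℕ) := by omega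
          rwa [heq] at this
  · intro v hv
    rw [Finset.mem_Icc] at hv
    rw [Finset.mem_biUnion]
    by_cases hva : v = 2 ∨ v = 3 ∨ v = 4
    · refine ⟨⟨0, by omega⟩, Finset.mem_univ _, ?_⟩
      rw [if_pos rfl]
      simp only [Finset.mem_insert, Finset.mem_singleton]; omega
    · by_cases hvb : v = 1 ∨ v = s + 3 ∨ v = 2*s+2
      · refine ⟨⟨1, by omega⟩, Finset.mem_univ _, ?_⟩
        rw [if_neg (by simp), if_pos (by simp)]
        simp only [Finset.mem_insert, Finset.mem_singleton]; omega
      · by_cases hvc : v = s + 2 ∨ v = 2*s+1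
        · refine ⟨⟨2, by omega⟩, Finset.mem_univ _, ?_⟩
          rw [if_neg (by simp), if_neg (by simp), if_pos (by simp)]
          simp only [Finset.mem_insert, Finset.mem_singleton]; omega
        · push_neg at hva hvb hvc
          by_cases hvlow : v ≤ s + 1
          · refine ⟨⟨v - 2, by omega⟩, Finset.mem_univ _, ?_⟩
            rw [if_neg (by simp; omega), if_neg (by simp; omega), if_neg (by simp; omega)]
            simp only [Finset.mem_insert, Finset.mem_singleton]
            right; left; omega
          · refine ⟨⟨2*s+3-v, by omega⟩, Finset.mem_univ _, ?_⟩
            rw [if_neg (by simp; omega), if_neg (by simp; omega), if_neg (by simp; omega)]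
            simp only [Finset.mem_insert, Finset.mem_singleton]
            right; right; omega


lemma erase_one_triple {y z : ℕ} (hy : 1 < y) (hz : y < z) :
    ({1, y, z} : Finset ℕ).erase 1 = {y, z} := by
  ext w
  simp only [Finset.mem_erase, Finset.mem_insert, Finset.mem_singleton]
  omega

lemma erase_top_triple {x y z : ℕ} (hx : x < y) (hz : y < z) :
    ({x, y, z} : Finset ℕ).erase z = {x, y} := by
  ext w
  simp only [Finset.mem_erase, Finset.mem_insert, Finset.mem_singleton]
  omega

lemma sup_triple {x y z : ℕ} (hx : x < y) (hz : y < z) :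
    ({x, y, z} : Finset ℕ).sup id = z := by
  rw [Finset.sup_insert, Finset.sup_insert, Finset.sup_singleton]
  simp only [id]
  rw [max_eq_right (by omega : y ≤ z), max_eq_right (by omega : x ≤ z)]

theorem main_bound (hs : 3 ≤ s) (hn : 2 * s + 4 ≤ n)
    (hF : ∀ e ∈ F, e ⊆ Finset.Icc 1 n ∧ e.card = 3)
    (hst : IsStable n F)
    (hU : HasU F s (2 * s + 1))
    (hnu : 2 ≤ matchNum F)
    (hnus : s + 2 ≤ matchNum (shadow2 F)) :
    F.card ≤ (Nat.choose (n-1) 2 - Nat.choose (n-s-2) 2) + Nat.choose (s-1) 2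
      + Nat.choose s 3 + Nat.choose s 2 * s := by
  classical
  have hL1 := L1 hs hn hF hst hU hnus
  have hL2 := L2 hs hn hF hst hU hnus
  have hL3 := L3 hs hn hF hst hU hnu hnus
  set P : Finset ℕ → Prop := fun e => 1 ∈ e with hP
  set Q : Finset ℕ → Prop := fun e => e.erase 1 ⊆ Finset.Icc (s+3) n with hQ
  set R : Finset ℕ → Prop := fun e => e ⊆ Finset.Icc 2 (s+1) with hR
  -- partition of cardinalities
  have hsplitP : (F.filter P).card + (F.filter (fun e => ¬ P e)).card = F.card :=
    Finset.card_filter_add_card_filter_not _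
  have hsplit1 : ((F.filter P).filter Q).card + ((F.filter P).filter (fun e => ¬ Q e)).card
      = (F.filter P).card := Finset.card_filter_add_card_filter_not _
  have hsplit2 : ((F.filter (fun e => ¬ P e)).filter R).card
      + ((F.filter (fun e => ¬ P e)).filter (fun e => ¬ R e)).card
      = (F.filter (fun e => ¬ P e)).card := Finset.card_filter_add_card_filter_not _
  -- Bound 1 : edges containing 1 with second vertex ≤ s+2
  have hb1 : ((F.filter P).filter (fun e => ¬ Q e)).card
      ≤ Nat.choose (n-1) 2 - Nat.choose (n-s-2) 2 := by
    have hsub12 : (Finset.Icc (s+3) n).powersetCard 2 ⊆ (Finset.Icc 2 n).powersetCard 2 :=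
      Finset.powersetCard_mono (Finset.Icc_subset_Icc (by omega) le_rfl)
    have h := Finset.card_le_card_of_injOn (fun e => e.erase 1)
      (s := (F.filter P).filter (fun e => ¬ Q e))
      (t := (Finset.Icc 2 n).powersetCard 2 \ (Finset.Icc (s+3) n).powersetCard 2)
      ?_ ?_
    · rw [Finset.card_sdiff_of_subset hsub12, Finset.card_powersetCard, Finset.card_powersetCard,
        Nat.card_Icc, Nat.card_Icc] at h
      rw [show n + 1 - 2 = n - 1 from by omega, show n + 1 - (s+3) = n - s - 2 from by omega] at h
      exact h
    · intro e he
      dsimp only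
      rw [Finset.mem_coe, Finset.mem_filter, Finset.mem_filter] at he
      obtain ⟨⟨heF, h1e⟩, hnQ⟩ := he
      simp only [hP] at h1e
      simp only [hQ] at hnQ
      rw [Finset.mem_coe, Finset.mem_sdiff, Finset.mem_powersetCard]
      refine ⟨⟨?_, ?_⟩, ?_⟩
      · intro w hw
        rw [Finset.mem_erase] at hw
        have := (hF e heF).1 hw.2
        rw [Finset.mem_Icc] at this ⊢
        have := hw.1
        omega
      · rw [Finset.card_erase_of_mem h1e, (hF e heF).2]
      · intro hmem
        rw [Finset.mem_powersetCard] at hmem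
        exact hnQ hmem.1
    · intro e he e' he' heq
      rw [Finset.mem_coe, Finset.mem_filter, Finset.mem_filter] at he he'
      simp only [hP] at he he'
      have heq' : e.erase 1 = e'.erase 1 := heq
      rw [← Finset.insert_erase he.1.2, ← Finset.insert_erase he'.1.2, heq']
  -- Bound 2 : edges containing 1 with second vertex ≥ s+3
  have hb2 : ((F.filter P).filter Q).card ≤ Nat.choose (s-1) 2 := by
    have h := Finset.card_le_card_of_injOn (fun e => e.erase 1)
      (s := (F.filter P).filter Q)
      (t := (Finset.Icc (s+3) (2*s+1)).powersetCard 2) ?_ ?_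
    · rw [Finset.card_powersetCard, Nat.card_Icc] at h
      rw [show 2*s + 1 + 1 - (s+3) = s - 1 from by omega] at h
      exact h
    · intro e he
      dsimp only
      rw [Finset.mem_coe, Finset.mem_filter, Finset.mem_filter] at he
      obtain ⟨⟨heF, h1e⟩, hQe⟩ := he
      simp only [hP] at h1e
      simp only [hQ] at hQe
      obtain ⟨x, y, z, hxy, hyz, rfl, hx1, hzn⟩ := exists_sorted_rep hF heF
      have hxeq : x = 1 := by
        simp only [Finset.mem_insert, Finset.mem_singleton] at h1e
        omega
      subst hxeq
      have hyz' : ({1, y, z} : Finset ℕ).erase 1 = {y, z} := erase_one_triple hxy hyz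
      have hys3 : s + 3 ≤ y := by
        have : y ∈ ({1, y, z} : Finset ℕ).erase 1 := by rw [hyz']; simp
        have := hQe this
        rw [Finset.mem_Icc] at this
        omega
      have hzle : z ≤ 2*s+1 := by
        by_contra hzz
        exact hL3 (stable_triple hst heF hxy hyz (by omega) (by omega) (by omega) (by omega)
          (by omega) (by omega) (by omega))
      rw [Finset.mem_coe, Finset.mem_powersetCard, hyz']
      constructor
      · intro w hw
        simp only [Finset.mem_insert, Finset.mem_singleton] at hw
        rw [Finset.mem_Icc]
        rcases hw with rfl | rfl <;> omega
      · rw [Finset.card_insert_of_notMem (by simp; omega), Finset.card_singleton]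
    · intro e he e' he' heq
      rw [Finset.mem_coe, Finset.mem_filter, Finset.mem_filter] at he he'
      simp only [hP] at he he'
      have heq' : e.erase 1 = e'.erase 1 := heq
      rw [← Finset.insert_erase he.1.2, ← Finset.insert_erase he'.1.2, heq']
  -- Bound 3 : edges avoiding 1 inside [2, s+1]
  have hb3 : ((F.filter (fun e => ¬ P e)).filter R).card ≤ Nat.choose s 3 := by
    have h := Finset.card_le_card_of_injOn (fun e => e)
      (s := (F.filter (fun e => ¬ P e)).filter R)
      (t := (Finset.Icc 2 (s+1)).powersetCard 3) ?_ ?_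
    · rw [Finset.card_powersetCard, Nat.card_Icc] at h
      rw [show s + 1 + 1 - 2 = s from by omega] at h
      exact h
    · intro e he
      rw [Finset.mem_coe, Finset.mem_filter, Finset.mem_filter] at he
      rw [Finset.mem_coe, Finset.mem_powersetCard]
      refine ⟨?_, (hF e he.1.1).2⟩
      have := he.2
      simp only [hR] at this
      exact this
    · intro e _ e' _ heq
      exact heq
  -- Bound 4 : edges avoiding 1 not inside [2, s+1]
  have hb4 : ((F.filter (fun e => ¬ P e)).filter (fun e => ¬ R e)).card
      ≤ Nat.choose s 2 * s := by
    have h := Finset.card_le_card_of_injOn (fun e => (e.erase (e.sup id), e.sup id))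
      (s := (F.filter (fun e => ¬ P e)).filter (fun e => ¬ R e))
      (t := ((Finset.Icc 2 (s+1)).powersetCard 2) ×ˢ (Finset.Icc (s+2) (2*s+1))) ?_ ?_
    · rw [Finset.card_product, Finset.card_powersetCard, Nat.card_Icc, Nat.card_Icc] at h
      rw [show s + 1 + 1 - 2 = s from by omega, show 2*s + 1 + 1 - (s+2) = s from by omega] at h
      exact h
    · intro e he
      dsimp only
      rw [Finset.mem_coe, Finset.mem_filter, Finset.mem_filter] at he
      obtain ⟨⟨heF, h1e⟩, hnR⟩ := he
      simp only [hP] at h1e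
      simp only [hR] at hnR
      obtain ⟨x, y, z, hxy, hyz, rfl, hx1, hzn⟩ := exists_sorted_rep hF heF
      have hx2 : 2 ≤ x := by
        rcases Nat.lt_or_ge x 2 with hcase | hcase
        · exfalso; apply h1e
          have : x = 1 := by omega
          subst this; simp
        · exact hcase
      have hys : y ≤ s + 1 := by
        by_contra hyy
        exact hL1 (stable_triple hst heF hxy hyz (by omega) (by omega) (by omega) (by omega)
          (by omega) (by omega) (by omega))
      have hzle : z ≤ 2*s+1 := by
        by_contra hzz
        exact hL2 (stable_triple hst heF hxy hyz (by omega) (by omega) (by omega) (by omega)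
          (by omega) (by omega) (by omega))
      have hzge : s + 2 ≤ z := by
        rw [Finset.not_subset] at hnR
        obtain ⟨w, hw, hwn⟩ := hnR
        rw [Finset.mem_Icc] at hwn
        push_neg at hwn
        simp only [Finset.mem_insert, Finset.mem_singleton] at hw
        rcases hw with rfl | rfl | rfl <;> omega
      have hsup := sup_triple hxy hyz
      rw [Finset.mem_coe, Finset.mem_product, hsup, erase_top_triple hxy hyz]
      constructor
      · rw [Finset.mem_powersetCard]
        constructor
        · intro w hw
          simp only [Finset.mem_insert, Finset.mem_singleton] at hw
          rw [Finset.mem_Icc]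
          rcases hw with rfl | rfl <;> omega
        · rw [Finset.card_insert_of_notMem (by simp; omega), Finset.card_singleton]
      · rw [Finset.mem_Icc]; omega
    · intro e he e' he' heq
      rw [Finset.mem_coe, Finset.mem_filter, Finset.mem_filter] at he he'
      have hsupmem : e.sup id ∈ e := by
        obtain ⟨x, y, z, hxy, hyz, rfl, hx1, hzn⟩ := exists_sorted_rep hF he.1.1
        rw [sup_triple hxy hyz]; simp
      have hsupmem' : e'.sup id ∈ e' := by
        obtain ⟨x, y, z, hxy, hyz, rfl, hx1, hzn⟩ := exists_sorted_rep hF he'.1.1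
        rw [sup_triple hxy hyz]; simp
      have h1 : e.erase (e.sup id) = e'.erase (e'.sup id) := congrArg Prod.fst heq
      have h2 : e.sup id = e'.sup id := congrArg Prod.snd heq
      rw [← Finset.insert_erase hsupmem, ← Finset.insert_erase hsupmem', h1, h2]
  omega

end main

/-- Lemma 3.2: the case nu(shadow F) ≥ s + 2. -/
theorem case_shadow_ge (n s : ℕ) (hs : 3 ≤ s) (hn : 2 * s + 4 ≤ n)
    (F : Finset (Finset ℕ))
    (hF : ∀ e ∈ F, e ⊆ Finset.Icc 1 n ∧ e.card = 3)
    (hst : IsStable n F)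
    (hU : HasU F s (2 * s + 1))
    (hnu : 2 ≤ matchNum F)
    (hnus : s + 2 ≤ matchNum (shadow2 F)) :
    F.card ≤ max (Nat.choose (n - 1) 2)
      (max ((n - s - 1) * Nat.choose (s + 1) 2 + Nat.choose (s + 1) 3)
        (Nat.choose (2 * s + 1) 3)) := by
  have hmb := main_bound hs hn hF hst hU hnu hnus
  have har := arith_main hs hn
  exact le_trans (le_trans hmb har) (le_trans (le_max_left _ _) (le_max_right _ _))
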